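/- Let G be a compact metric group, nu a finite positive Borel measure on G, and f a bounded measurable function on G whose set of discontinuities is D_f. If x in G satisfies nu(x D_f^{-1}) = 0 where x D_f^{-1} = {x d^{-1} : d in D_f}, then the convolution h(x) = integral over G of f(z^{-1} x) dnu(z) is continuous at x. -/

import Mathlib

open MeasureTheory

/-- if `ν(x D_f⁻¹) = 0`, where `D_f` is the discontinuity set of
the bounded measurable function `f`, then `h(y) = ∫ f(z⁻¹ y) dν(z)` is
continuous at `x`. -/
theorem conv_continuousAt {G : Type*} [Group G] [MetricSpace G] [CompactSpace G]
    [IsTopologicalGroup G] [MeasurableSpace G] [BorelSpace G]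
    (ν : Measure G) [IsFiniteMeasure ν]
    (f : G → ℝ) (hf : Measurable f) (M : ℝ) (hbdd : ∀ g, |f g| ≤ M)
    (x : G)
    (hx : ν ((fun d => x * d⁻¹) '' {y | ¬ ContinuousAt f y}) = 0) :
    ContinuousAt (fun y => ∫ z, f (z⁻¹ * y) ∂ν) x := by
  have hnull : ν {z | ¬ ContinuousAt f (z⁻¹ * x)} = 0 := by
    refine measure_mono_null ?_ hx
    intro z hz
    exact ⟨z⁻¹ * x, hz, by group⟩
  refine tendsto_integral_filter_of_dominated_convergence (fun _ => M)
    ?_ ?_ (integrable_const M) ?_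
  · filter_upwards with y
    exact (hf.comp ((measurable_inv).mul_const y)).aestronglyMeasurable
  · filter_upwards with y
    filter_upwards with z
    simpa using hbdd (z⁻¹ * y)
  · have : ∀ᵐ z ∂ν, ContinuousAt f (z⁻¹ * x) := by
      rw [ae_iff]; simpa using hnull
    filter_upwards [this] with z hz
    exact hz.comp (by exact (continuous_const.mul continuous_id).continuousAt)
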